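/- Let p be a prime with p ≡ 1 (mod 4), let e be a positive integer, and set n = p^e. Then the p-adic valuation of the discriminant of F_n(x) equals e − e(n−1). -/

import Mathlib

open Polynomial BigOperators

/-- `F n` is the truncated logarithmic polynomial `1 + x + x²/2 + ⋯ + xⁿ/n ∈ ℚ[x]`. -/
noncomputable def F (n : ℕ) : Polynomial ℚ :=
  1 + ∑ k ∈ Finset.Icc 1 n, Polynomial.C ((k : ℚ)⁻¹) * Polynomial.X ^ k

/-- `Ln n = lcm {1, 2, …, n}`. -/
def Ln (n : ℕ) : ℕ := (Finset.Icc 1 n).lcm id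

/-- `Ftilde n = Ln n • F n`, a polynomial with integer coefficients. -/
noncomputable def Ftilde (n : ℕ) : Polynomial ℚ := Polynomial.C ((Ln n : ℚ)) * F n

/-- The resultant `Res(P, Q)` of two polynomials over `ℚ`, computed in `ℂ` via the
product formula `Res(P,Q) = lc(P)^(deg Q) * ∏_{P(r)=0} Q(r)` (roots with multiplicity). -/
noncomputable def resC (P Q : Polynomial ℚ) : ℂ :=
  ((P.leadingCoeff : ℂ)) ^ Q.natDegree *
    ((P.map (algebraMap ℚ ℂ)).roots.map (fun r => (Q.map (algebraMap ℚ ℂ)).eval r)).prod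

/-- The discriminant `disc P = (−1)^(n(n−1)/2) ⬝ a_n⁻¹ ⬝ Res(P, P′)`, as a complex number. -/
noncomputable def discC (P : Polynomial ℚ) : ℂ :=
  (-1) ^ (P.natDegree.choose 2) * ((P.leadingCoeff : ℂ))⁻¹ * resC P (Polynomial.derivative P)

/-- `𝒫 n = ∏_θ F̃_n(θ)`, the product over the nontrivial `n`-th roots of unity in `ℂ`. -/
noncomputable def P (n : ℕ) : ℂ :=
  ∏ θ ∈ (Polynomial.nthRootsFinset n (1 : ℂ)).erase 1, (Polynomial.aeval θ) (Ftilde n)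

/-- `Xc m ω = ∏_{k=1}^{m−1} (1/m + ω^k + ω^{2k}/2 + ⋯ + ω^{(m−1)k}/(m−1))`. -/
noncomputable def Xc (m : ℕ) (ω : ℂ) : ℂ :=
  ∏ k ∈ Finset.Icc 1 (m - 1), ((m : ℂ)⁻¹ + ∑ j ∈ Finset.Icc 1 (m - 1), ω ^ (j * k) / (j : ℂ))

/-- `Y m = 1 + 1/2 + ⋯ + 1/m ∈ ℚ`. -/
def Y (m : ℕ) : ℚ := ∑ j ∈ Finset.Icc 1 m, (j : ℚ)⁻¹


section AuxProof

lemma F_succ (m : ℕ) :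
    F (m + 1) = (1 + ∑ k ∈ Finset.Icc 1 m, Polynomial.C ((k : ℚ)⁻¹) * Polynomial.X ^ k)
      + Polynomial.C (((m:ℚ) + 1)⁻¹) * Polynomial.X ^ (m + 1) := by
  rw [F, Finset.sum_Icc_succ_top (by omega : 1 ≤ m + 1), ← add_assoc]
  push_cast
  ring_nf
  congr 1
  exact Finset.sum_congr rfl (fun _ _ => mul_comm _ _)

lemma F_low_degree (m : ℕ) :
    (1 + ∑ k ∈ Finset.Icc 1 m, Polynomial.C ((k : ℚ)⁻¹) * Polynomial.X ^ k).degree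
      < ((m + 1 : ℕ) : WithBot ℕ) := by
  apply lt_of_le_of_lt (Polynomial.degree_add_le _ _)
  apply max_lt
  · exact lt_of_le_of_lt Polynomial.degree_one_le (by exact_mod_cast WithBot.coe_lt_coe.mpr (by omega : 0 < m + 1))
  · apply lt_of_le_of_lt (Polynomial.degree_sum_le _ _)
    apply Finset.sup_lt_iff (by exact_mod_cast WithBot.bot_lt_coe (m+1)) |>.mpr
    intro k hk
    simp only [Finset.mem_Icc] at hk
    calc (Polynomial.C ((k : ℚ)⁻¹) * Polynomial.X ^ k).degree ≤ (k : WithBot ℕ) := by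
          apply le_trans (Polynomial.degree_mul_le _ _)
          simpa using add_le_add Polynomial.degree_C_le (le_of_eq (Polynomial.degree_X_pow (R:=ℚ) k))
      _ < ((m + 1 : ℕ) : WithBot ℕ) := by exact_mod_cast WithBot.coe_lt_coe.mpr (by omega)

lemma F_degree {n : ℕ} (hn : 1 ≤ n) : (F n).degree = n := by
  obtain ⟨m, rfl⟩ : ∃ m, n = m + 1 := ⟨n - 1, by omega⟩
  rw [F_succ]
  rw [Polynomial.degree_add_eq_right_of_degree_lt, Polynomial.degree_C_mul_X_pow]
  · exact inv_ne_zero (by positivity)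
  · rw [Polynomial.degree_C_mul_X_pow _ (inv_ne_zero (by positivity))]
    exact F_low_degree m

lemma F_natDegree {n : ℕ} (hn : 1 ≤ n) : (F n).natDegree = n :=
  Polynomial.natDegree_eq_of_degree_eq_some (F_degree hn)

lemma F_ne_zero {n : ℕ} (hn : 1 ≤ n) : F n ≠ 0 := by
  intro h
  have := F_degree hn
  rw [h, Polynomial.degree_zero] at this
  exact absurd this (by simp)

lemma F_leadingCoeff {n : ℕ} (hn : 1 ≤ n) : (F n).leadingCoeff = (n : ℚ)⁻¹ := by
  obtain ⟨m, rfl⟩ : ∃ m, n = m + 1 := ⟨n - 1, by omega⟩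
  rw [F_succ, Polynomial.leadingCoeff_add_of_degree_lt]
  · rw [Polynomial.leadingCoeff_C_mul_X_pow]
    push_cast; ring_nf
  · rw [Polynomial.degree_C_mul_X_pow _ (inv_ne_zero (by positivity))]
    exact F_low_degree m

lemma F_deriv (n : ℕ) :
    Polynomial.derivative (F n) = ∑ i ∈ Finset.range n, (Polynomial.X : Polynomial ℚ) ^ i := by
  rw [F, map_add, map_sum]
  rw [show Polynomial.derivative (1 : Polynomial ℚ) = 0 from Polynomial.derivative_one, zero_add]
  rw [Finset.sum_bij' (i := fun (k : ℕ) _ => k - 1) (j := fun (i : ℕ) _ => i + 1)]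
  · intro k hk; simp only [Finset.mem_Icc] at hk; simp only [Finset.mem_range]; omega
  · intro i hi; simp only [Finset.mem_range] at hi; simp only [Finset.mem_Icc]; omega
  · intro k hk; simp only [Finset.mem_Icc] at hk; omega
  · intro i hi; omega
  · intro k hk
    simp only [Finset.mem_Icc] at hk
    rw [Polynomial.derivative_C_mul_X_pow]
    have : ((k:ℚ)⁻¹ * k) = 1 := inv_mul_cancel₀ (by exact_mod_cast (by omega : k ≠ 0))
    rw [this, Polynomial.C_1, one_mul]

noncomputable def gq (n : ℕ) : Polynomial ℚ := ∑ i ∈ Finset.range n, Polynomial.X ^ i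

noncomputable def Fc (n : ℕ) : Polynomial ℂ := (F n).map (algebraMap ℚ ℂ)

noncomputable def gc (n : ℕ) : Polynomial ℂ := (gq n).map (algebraMap ℚ ℂ)

lemma gq_monic {n : ℕ} (hn : 1 ≤ n) : (gq n).Monic :=
  Polynomial.monic_geom_sum_X (by omega)

lemma gc_eq (n : ℕ) : gc n = ∑ i ∈ Finset.range n, Polynomial.X ^ i := by
  rw [gc, gq, Polynomial.map_sum]
  simp

lemma gc_monic {n : ℕ} (hn : 1 ≤ n) : (gc n).Monic := by
  rw [gc_eq]; exact Polynomial.monic_geom_sum_X (by omega)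

lemma gc_mul (n : ℕ) : gc n * (Polynomial.X - 1) = Polynomial.X ^ n - 1 := by
  rw [gc_eq]; exact geom_sum_mul _ n

lemma gq_natDegree {n : ℕ} (hn : 1 ≤ n) : (gq n).natDegree = n - 1 := by
  have hmul : gq n * (Polynomial.X - 1) = Polynomial.X ^ n - 1 := geom_sum_mul _ n
  have h1 : ((Polynomial.X : Polynomial ℚ) ^ n - 1) = Polynomial.X ^ n - Polynomial.C 1 := by
    rw [Polynomial.C_1]
  have h2 : ((Polynomial.X : Polynomial ℚ) - 1) = Polynomial.X - Polynomial.C 1 := by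
    rw [Polynomial.C_1]
  have hX : (Polynomial.X - 1 : Polynomial ℚ) ≠ 0 := by
    rw [h2]; exact Polynomial.X_sub_C_ne_zero 1
  have hd : (gq n).natDegree + 1 = n := by
    have := Polynomial.natDegree_mul (gq_monic hn).ne_zero hX
    rw [hmul, h1, Polynomial.natDegree_X_pow_sub_C, h2, Polynomial.natDegree_X_sub_C] at this
    omega
  omega

lemma gc_natDegree {n : ℕ} (hn : 1 ≤ n) : (gc n).natDegree = n - 1 := by
  rw [gc, Polynomial.natDegree_map_eq_of_injective (algebraMap ℚ ℂ).injective, gq_natDegree hn]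

lemma gc_roots_card {n : ℕ} (hn : 1 ≤ n) : Multiset.card (gc n).roots = n - 1 := by
  rw [← gc_natDegree hn]
  exact (Polynomial.splits_iff_card_roots.mp (IsAlgClosed.splits _))

lemma gc_roots_pow {n : ℕ} {θ : ℂ} (hθ : θ ∈ (gc n).roots) : θ ^ n = 1 := by
  have h0 : (gc n).IsRoot θ := (Polynomial.mem_roots'.mp hθ).2
  have : ((Polynomial.X : Polynomial ℂ) ^ n - 1).eval θ = 0 := by
    rw [← gc_mul]
    simp [Polynomial.IsRoot.def.mp h0]
  simpa [sub_eq_zero] using this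

lemma prod_map_neg_one_mul (s : Multiset ℂ) (f : ℂ → ℂ) (c : ℂ) :
    (s.map (fun x => c * f x)).prod = c ^ Multiset.card s * (s.map f).prod := by
  rw [show (fun x => c * f x) = (fun x => (fun _ : ℂ => c) x * f x) from rfl,
    Multiset.prod_map_mul]
  congr 1
  rw [Multiset.map_const', Multiset.prod_replicate]

lemma prod_eval_roots_swap (P Q : Polynomial ℂ) (hP : P ≠ 0) (hQ : Q.Monic) :
    (P.roots.map (fun r => Q.eval r)).prod =
      (-1) ^ (P.natDegree * Q.natDegree) * (P.leadingCoeff⁻¹) ^ Q.natDegree *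
        (Q.roots.map (fun s => P.eval s)).prod := by
  have cardP : Multiset.card P.roots = P.natDegree :=
    Polynomial.splits_iff_card_roots.mp (IsAlgClosed.splits _)
  have cardQ : Multiset.card Q.roots = Q.natDegree :=
    Polynomial.splits_iff_card_roots.mp (IsAlgClosed.splits _)
  have hlc : P.leadingCoeff ≠ 0 := Polynomial.leadingCoeff_ne_zero.mpr hP
  have hQe : Q = (Q.roots.map (fun s => Polynomial.X - Polynomial.C s)).prod :=
    (IsAlgClosed.splits _).eq_prod_roots_of_monic hQ
  have hPe : Polynomial.C P.leadingCoeff *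
      (P.roots.map (fun r => Polynomial.X - Polynomial.C r)).prod = P :=
    Polynomial.C_leadingCoeff_mul_prod_multiset_X_sub_C cardP
  have hQev : ∀ r : ℂ, Q.eval r = (Q.roots.map (fun s => r - s)).prod := by
    intro r
    conv_lhs => rw [hQe]
    rw [Polynomial.eval_multiset_prod, Multiset.map_map]
    simp
  have hPev : ∀ s : ℂ, (P.roots.map (fun r => s - r)).prod = P.leadingCoeff⁻¹ * P.eval s := by
    intro s
    have := congrArg (Polynomial.eval s) hPe
    rw [Polynomial.eval_mul, Polynomial.eval_C, Polynomial.eval_multiset_prod,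
      Multiset.map_map] at this
    simp only [Function.comp, Polynomial.eval_sub, Polynomial.eval_X, Polynomial.eval_C] at this
    rw [← this]
    field_simp
  calc (P.roots.map (fun r => Q.eval r)).prod
      = (P.roots.map (fun r => (Q.roots.map (fun s => r - s)).prod)).prod := by
        congr 1; exact Multiset.map_congr rfl (fun r _ => hQev r)
    _ = (Q.roots.map (fun s => (P.roots.map (fun r => r - s)).prod)).prod :=
        Multiset.prod_map_prod_map P.roots Q.roots
    _ = (Q.roots.map (fun s => (-1) ^ P.natDegree * (P.leadingCoeff⁻¹ * P.eval s))).prod := by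
        congr 1
        refine Multiset.map_congr rfl (fun s _ => ?_)
        have : (P.roots.map (fun r => r - s)).prod
            = (P.roots.map (fun r => (-1) * (s - r))).prod := by
          congr 1; exact Multiset.map_congr rfl (fun r _ => by ring)
        rw [this, prod_map_neg_one_mul, cardP, hPev s]
    _ = (-1) ^ (P.natDegree * Q.natDegree) * (P.leadingCoeff⁻¹) ^ Q.natDegree *
        (Q.roots.map (fun s => P.eval s)).prod := by
        rw [prod_map_neg_one_mul, cardQ, prod_map_neg_one_mul, cardQ, ← pow_mul]
        ring

lemma resC_eq {n : ℕ} (hn : 2 ≤ n) :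
    resC (F n) (Polynomial.derivative (F n)) =
      ((gc n).roots.map (fun θ => (Fc n).eval θ)).prod := by
  have hn1 : 1 ≤ n := by omega
  have hFc0 : Fc n ≠ 0 := by
    rw [Fc]
    exact (Polynomial.map_ne_zero_iff (algebraMap ℚ ℂ).injective).mpr (F_ne_zero hn1)
  have hFcdeg : (Fc n).natDegree = n := by
    rw [Fc, Polynomial.natDegree_map_eq_of_injective (algebraMap ℚ ℂ).injective, F_natDegree hn1]
  have hlc0 : ((n:ℚ))⁻¹ ≠ 0 := inv_ne_zero (Nat.cast_ne_zero.mpr (by omega))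
  have hFclc : (Fc n).leadingCoeff = ((n : ℂ))⁻¹ := by
    rw [Fc, Polynomial.leadingCoeff_map_of_leadingCoeff_ne_zero, F_leadingCoeff hn1]
    · rw [map_inv₀, map_natCast]
    · rw [F_leadingCoeff hn1]
      exact (map_ne_zero_iff _ (algebraMap ℚ ℂ).injective).mpr hlc0
  have hderiv : Polynomial.derivative (F n) = gq n := by rw [F_deriv, gq]
  rw [resC, hderiv, ← gc, ← Fc, gq_natDegree hn1, F_leadingCoeff hn1,
    prod_eval_roots_swap (Fc n) (gc n) hFc0 (gc_monic hn1), hFcdeg, gc_natDegree hn1, hFclc]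
  have heven : Even (n * (n - 1)) := by
    obtain ⟨m, rfl⟩ : ∃ m, n = m + 1 := ⟨n - 1, by omega⟩
    simpa [Nat.mul_comm] using Nat.even_mul_succ_self m
  rw [heven.neg_one_pow]
  have hne : ((n : ℂ)) ≠ 0 := Nat.cast_ne_zero.mpr (by omega)
  push_cast
  field_simp
  rw [one_div, inv_pow, inv_mul_cancel₀ (pow_ne_zero _ hne), one_mul]

lemma discC_eq {n : ℕ} (hn : 2 ≤ n) :
    discC (F n) = (-1) ^ (n.choose 2) * (n : ℂ) *
      ((gc n).roots.map (fun θ => (Fc n).eval θ)).prod := by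
  have hn1 : 1 ≤ n := by omega
  rw [discC, resC_eq hn, F_natDegree hn1, F_leadingCoeff hn1]
  congr 1
  push_cast
  rw [inv_inv]

lemma exists_rat_prod_aux :
    ∀ (d : ℕ) (B : Polynomial ℚ), B.Monic → B.natDegree ≤ d → ∀ (A : Polynomial ℚ),
      ∃ q : ℚ, ((B.map (algebraMap ℚ ℂ)).roots.map
        (fun θ => (A.map (algebraMap ℚ ℂ)).eval θ)).prod = (q : ℂ) := by
  intro d
  induction d with
  | zero =>
    intro B hB hBd A
    have hB1 : B = 1 := hB.natDegree_eq_zero.mp (Nat.le_zero.mp hBd)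
    exact ⟨1, by simp [hB1]⟩
  | succ d ih =>
    intro B hB hBd A
    by_cases hd : B.natDegree ≤ d
    · exact ih B hB hd A
    have hBd1 : B.natDegree = d + 1 := by omega
    set R := A %ₘ B with hRdef
    have hprodeq : ((B.map (algebraMap ℚ ℂ)).roots.map
          (fun θ => (A.map (algebraMap ℚ ℂ)).eval θ)).prod
        = ((B.map (algebraMap ℚ ℂ)).roots.map
          (fun θ => (R.map (algebraMap ℚ ℂ)).eval θ)).prod := by
      congr 1
      refine Multiset.map_congr rfl (fun θ hθ => ?_)
      have hθ0 : (B.map (algebraMap ℚ ℂ)).eval θ = 0 := (Polynomial.mem_roots'.mp hθ).2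
      have hdiv : R + B * (A /ₘ B) = A := Polynomial.modByMonic_add_div A B
      have hc := congrArg (fun P : Polynomial ℚ =>
        Polynomial.eval θ (Polynomial.map (algebraMap ℚ ℂ) P)) hdiv
      simp only [Polynomial.map_add, Polynomial.map_mul, Polynomial.eval_add,
        Polynomial.eval_mul, hθ0, zero_mul, add_zero] at hc
      rw [← hc]
    have hcardB : Multiset.card (B.map (algebraMap ℚ ℂ)).roots = d + 1 := by
      rw [Polynomial.splits_iff_card_roots.mp (IsAlgClosed.splits _),
        Polynomial.natDegree_map_eq_of_injective (algebraMap ℚ ℂ).injective, hBd1]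
    by_cases hR0 : R = 0
    · refine ⟨0, ?_⟩
      rw [hprodeq]
      obtain ⟨θ, hθ⟩ := Multiset.exists_mem_of_ne_zero
        (by rw [← Multiset.card_pos] at *; omega :
          (B.map (algebraMap ℚ ℂ)).roots ≠ 0)
      rw [Rat.cast_zero]
      refine Multiset.prod_eq_zero ?_
      refine Multiset.mem_map.mpr ⟨θ, hθ, ?_⟩
      simp [hR0]
    · have hRdeg : R.natDegree < B.natDegree :=
        Polynomial.natDegree_lt_natDegree hR0 (Polynomial.degree_modByMonic_lt A hB)
      have hc0 : R.leadingCoeff ≠ 0 := Polynomial.leadingCoeff_ne_zero.mpr hR0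
      set R1 : Polynomial ℚ := R * Polynomial.C R.leadingCoeff⁻¹ with hR1def
      have hR1monic : R1.Monic := Polynomial.monic_mul_leadingCoeff_inv hR0
      have hR1deg : R1.natDegree ≤ d := by
        rw [hR1def, Polynomial.natDegree_mul hR0 (by
          simpa using inv_ne_zero hc0), Polynomial.natDegree_C]
        omega
      have hR1R : R1 * Polynomial.C R.leadingCoeff = R := by
        rw [hR1def, mul_assoc, ← Polynomial.C_mul, inv_mul_cancel₀ hc0, Polynomial.C_1, mul_one]
      obtain ⟨q', hq'⟩ := ih R1 hR1monic hR1deg B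
      refine ⟨R.leadingCoeff ^ (d + 1) *
        ((-1 : ℚ) ^ ((d + 1) * R1.natDegree) * q'), ?_⟩
      rw [hprodeq]
      have hmapR : R.map (algebraMap ℚ ℂ)
          = R1.map (algebraMap ℚ ℂ) * Polynomial.C ((R.leadingCoeff : ℂ)) := by
        conv_lhs => rw [← hR1R]
        rw [Polynomial.map_mul, Polynomial.map_C, eq_ratCast]
      have hBc0 : B.map (algebraMap ℚ ℂ) ≠ 0 :=
        (Polynomial.map_ne_zero_iff (algebraMap ℚ ℂ).injective).mpr hB.ne_zero
      have hBcmonic : (B.map (algebraMap ℚ ℂ)).Monic := hB.map _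
      have step1 : ((B.map (algebraMap ℚ ℂ)).roots.map
            (fun θ => (R.map (algebraMap ℚ ℂ)).eval θ)).prod
          = ((R.leadingCoeff : ℂ)) ^ (d + 1) * ((B.map (algebraMap ℚ ℂ)).roots.map
            (fun θ => (R1.map (algebraMap ℚ ℂ)).eval θ)).prod := by
        have : ∀ θ : ℂ, (R.map (algebraMap ℚ ℂ)).eval θ
            = ((R.leadingCoeff : ℂ)) * (R1.map (algebraMap ℚ ℂ)).eval θ := by
          intro θ; rw [hmapR]; simp [mul_comm]
        rw [Multiset.map_congr rfl (fun θ _ => this θ), prod_map_neg_one_mul, hcardB]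
      have step2 := prod_eval_roots_swap (B.map (algebraMap ℚ ℂ))
        (R1.map (algebraMap ℚ ℂ)) hBc0 (hR1monic.map _)
      rw [hBcmonic.leadingCoeff, inv_one, one_pow, mul_one] at step2
      have hndR1 : (R1.map (algebraMap ℚ ℂ)).natDegree = R1.natDegree :=
        Polynomial.natDegree_map_eq_of_injective (algebraMap ℚ ℂ).injective R1
      have hndB : (B.map (algebraMap ℚ ℂ)).natDegree = d + 1 := by
        rw [Polynomial.natDegree_map_eq_of_injective (algebraMap ℚ ℂ).injective, hBd1]
      rw [step1, step2, hndR1, hndB, hq']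
      push_cast
      ring

lemma finset_lcm_ne_zero (s : Finset ℕ) (h : ∀ b ∈ s, b ≠ 0) : s.lcm id ≠ 0 := by
  classical
  induction s using Finset.induction_on with
  | empty => simp
  | @insert a s ha ih =>
    rw [Finset.lcm_insert]
    intro h0
    rcases (lcm_eq_zero_iff _ _).mp h0 with h1 | h1
    · exact h a (Finset.mem_insert_self a s) (by simpa using h1)
    · exact ih (fun b hb => h b (Finset.mem_insert_of_mem hb)) h1

lemma Ln_ne_zero (n : ℕ) : Ln n ≠ 0 := by
  apply finset_lcm_ne_zero
  intro b hb
  simp only [Finset.mem_Icc] at hb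
  omega

lemma not_pow_dvd_lcm {p : ℕ} (hp : p.Prime) (k : ℕ) (hk : 1 ≤ k) :
    ∀ (s : Finset ℕ), (∀ b ∈ s, ¬ p ^ k ∣ b) → ¬ p ^ k ∣ s.lcm id := by
  classical
  intro s
  induction s using Finset.induction_on with
  | empty =>
    intro _ hdvd
    rw [Finset.lcm_empty] at hdvd
    have := Nat.le_of_dvd one_pos hdvd
    have : 2 ≤ p ^ k := le_trans hp.two_le (Nat.le_self_pow (by omega) p)
    omega
  | @insert a s ha ih =>
    intro h hdvd
    rw [Finset.lcm_insert] at hdvd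
    have hane : a ≠ 0 := by
      intro h0
      exact h a (Finset.mem_insert_self a s) (h0 ▸ dvd_zero _)
    have hlne : s.lcm id ≠ 0 := finset_lcm_ne_zero s (fun b hb h0 =>
      h b (Finset.mem_insert_of_mem hb) (h0 ▸ dvd_zero _))
    have hlcmne : Nat.lcm a (s.lcm id) ≠ 0 := Nat.lcm_ne_zero hane hlne
    have hfact : (Nat.lcm a (s.lcm id)).factorization
        = a.factorization ⊔ (s.lcm id).factorization := Nat.factorization_lcm hane hlne
    have hle : k ≤ (Nat.lcm a (s.lcm id)).factorization p :=
      (Nat.Prime.pow_dvd_iff_le_factorization hp hlcmne).mp hdvd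
    rw [hfact, Finsupp.sup_apply, le_sup_iff] at hle
    rcases hle with hle | hle
    · exact h a (Finset.mem_insert_self a s)
        ((Nat.Prime.pow_dvd_iff_le_factorization hp hane).mpr hle)
    · exact ih (fun b hb => h b (Finset.mem_insert_of_mem hb))
        ((Nat.Prime.pow_dvd_iff_le_factorization hp hlne).mpr hle)

section Arith

variable {p e n : ℕ} (hp : p.Prime) (he : 1 ≤ e) (hn : n = p ^ e)

include hp he hn

lemma hn2 : 2 ≤ n := by
  have := hp.two_le
  have : p ≤ p ^ e := Nat.le_self_pow (by omega) p
  omega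

lemma n_dvd_Ln : n ∣ Ln n := by
  have h2 := hn2 hp he hn
  exact Finset.dvd_lcm (by simp only [Finset.mem_Icc]; omega)

lemma not_pe1_dvd_Ln : ¬ p ^ (e + 1) ∣ Ln n := by
  apply not_pow_dvd_lcm hp (e + 1) (by omega)
  intro b hb hdvd
  simp only [Finset.mem_Icc] at hb
  have h1 : p ^ (e + 1) ≤ b := Nat.le_of_dvd (by omega) hdvd
  have h2 : p ^ e < p ^ (e + 1) := Nat.pow_lt_pow_succ hp.one_lt
  omega

lemma p_dvd_Ln_div_k {k : ℕ} (hk1 : 1 ≤ k) (hkn : k ≤ n - 1) : p ∣ Ln n / k := by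
  have h2 := hn2 hp he hn
  have hkdvd : k ∣ Ln n := Finset.dvd_lcm (by simp only [Finset.mem_Icc]; omega)
  set a := Ln n / k with ha
  have hak : a * k = Ln n := Nat.div_mul_cancel hkdvd
  by_contra hnd
  have hLn0 : Ln n ≠ 0 := Ln_ne_zero n
  have ha0 : a ≠ 0 := by
    intro h0; rw [h0, zero_mul] at hak; exact hLn0 hak.symm
  have hk0 : k ≠ 0 := by omega
  have hfa : a.factorization p = 0 := Nat.factorization_eq_zero_of_not_dvd hnd
  have hpe_dvd : p ^ e ∣ a * k := by rw [hak]; exact hn ▸ n_dvd_Ln hp he hn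
  have hle : e ≤ (a * k).factorization p :=
    (Nat.Prime.pow_dvd_iff_le_factorization hp (by positivity)).mp hpe_dvd
  rw [Nat.factorization_mul ha0 hk0, Finsupp.add_apply, hfa, zero_add] at hle
  have hpk : p ^ e ∣ k := (Nat.Prime.pow_dvd_iff_le_factorization hp hk0).mpr hle
  have : n ≤ k := Nat.le_of_dvd (by omega) (hn ▸ hpk)
  omega

lemma not_p_dvd_Ln_div_n : ¬ p ∣ Ln n / n := by
  have h2 := hn2 hp he hn
  have hndvd : n ∣ Ln n := n_dvd_Ln hp he hn
  intro hdvd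
  obtain ⟨c, hc⟩ := hdvd
  have hLn : Ln n / n * n = Ln n := Nat.div_mul_cancel hndvd
  apply not_pe1_dvd_Ln hp he hn
  refine ⟨c, ?_⟩
  rw [← hLn, hc, hn]
  ring

lemma key_arith : ¬ p ∣ (Ln n + ∑ k ∈ Finset.Icc 1 n, Ln n / k) := by
  have h2 := hn2 hp he hn
  obtain ⟨m, hm⟩ : ∃ m, n = m + 1 := ⟨n - 1, by omega⟩
  have hsplit : ∑ k ∈ Finset.Icc 1 n, Ln n / k
      = (∑ k ∈ Finset.Icc 1 m, Ln n / k) + Ln n / n := by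
    rw [hm, Finset.sum_Icc_succ_top (by omega : 1 ≤ m + 1)]
  have hpLn : p ∣ Ln n := by
    apply Finset.dvd_lcm (f := id) (b := p)
    simp only [Finset.mem_Icc]
    have : p ≤ p ^ e := Nat.le_self_pow (by omega) p
    constructor
    · exact hp.one_lt.le
    · omega
  have hpsum : p ∣ ∑ k ∈ Finset.Icc 1 m, Ln n / k := by
    apply Finset.dvd_sum
    intro k hk
    simp only [Finset.mem_Icc] at hk
    exact p_dvd_Ln_div_k hp he hn hk.1 (by omega)
  intro hdvd
  rw [hsplit, ← add_assoc] at hdvd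
  have : p ∣ Ln n / n := (Nat.dvd_add_right (Dvd.dvd.add hpLn hpsum)).mp hdvd
  exact not_p_dvd_Ln_div_n hp he hn this

end Arith

noncomputable def Gz (n : ℕ) : Polynomial ℤ :=
  Polynomial.C ((Ln n : ℤ)) +
    ∑ k ∈ Finset.Icc 1 n, Polynomial.C (Int.ofNat (Ln n / k)) * Polynomial.X ^ k

lemma Gz_eval_one (n : ℕ) :
    (Gz n).eval 1 = ((Ln n + ∑ k ∈ Finset.Icc 1 n, Ln n / k : ℕ) : ℤ) := by
  rw [Gz]
  simp [Polynomial.eval_finset_sum]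

lemma Gz_map_rat (n : ℕ) :
    (Gz n).map (Int.castRingHom ℚ) = Polynomial.C ((Ln n : ℚ)) * F n := by
  rw [Gz, F, Polynomial.map_add, Polynomial.map_C, Polynomial.map_sum, mul_add, mul_one,
    Finset.mul_sum]
  congr 1
  refine Finset.sum_congr rfl (fun k hk => ?_)
  simp only [Finset.mem_Icc] at hk
  have hkdvd : k ∣ Ln n := Finset.dvd_lcm (by simp only [Finset.mem_Icc]; omega)
  have hk0 : (k : ℚ) ≠ 0 := Nat.cast_ne_zero.mpr (by omega)
  rw [Polynomial.map_mul, Polynomial.map_C, Polynomial.map_pow, Polynomial.map_X,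
    ← mul_assoc, ← Polynomial.C_mul]
  congr 2
  rw [show ((Int.castRingHom ℚ) (Int.ofNat (Ln n / k))) = (((Ln n / k : ℕ) : ℚ)) by norm_cast,
    Nat.cast_div hkdvd hk0]
  field_simp

lemma gc_roots_integral {n : ℕ} (hn : 1 ≤ n) {θ : ℂ} (hθ : θ ∈ (gc n).roots) :
    IsIntegral ℤ θ := by
  refine ⟨Polynomial.X ^ n - Polynomial.C 1, Polynomial.monic_X_pow_sub_C 1 (by omega), ?_⟩
  have := gc_roots_pow hθ
  simp [this]

lemma quotient_not_dvd {R : Type*} [CommRing R] {p e n : ℕ} (hp : p.Prime) (he : 1 ≤ e)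
    (hnpe : n = p ^ e)
    (hpnu : ¬ IsUnit ((algebraMap ℤ R) ((p : ℤ))))
    (hGz : ¬ (p : ℤ) ∣ (Gz n).eval 1)
    (T : Multiset R) (hT : ∀ x ∈ T, ∃ θ : R, θ ^ n = 1 ∧ x = Polynomial.aeval θ (Gz n))
    (m : ℤ) (hm : algebraMap ℤ R m = T.prod) : ¬ (p : ℤ) ∣ m := by
  haveI : Fact p.Prime := ⟨hp⟩
  intro hdvd
  have hspan : Ideal.span {(algebraMap ℤ R) ((p : ℤ))} ≠ ⊤ := by
    rw [Ne, Ideal.span_singleton_eq_top]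
    exact hpnu
  obtain ⟨𝔭, h𝔭max, h𝔭le⟩ := Ideal.exists_le_maximal _ hspan
  haveI := h𝔭max
  haveI := h𝔭max.isPrime
  have hpmem : (algebraMap ℤ R) ((p : ℤ)) ∈ 𝔭 := h𝔭le (Ideal.subset_span rfl)
  set ψ : ℤ →+* R ⧸ 𝔭 := (Ideal.Quotient.mk 𝔭).comp (algebraMap ℤ R) with hψ
  have hψp : ψ ((p : ℤ)) = 0 := by
    rw [hψ, RingHom.comp_apply, Ideal.Quotient.eq_zero_iff_mem]
    exact hpmem
  have hker : ∀ z : ℤ, ψ z = 0 ↔ (p : ℤ) ∣ z := by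
    intro z
    constructor
    · intro h0
      by_contra hnd
      have hgcd : IsCoprime ((p : ℤ)) z := by
        rw [Int.isCoprime_iff_gcd_eq_one]
        have hnd' : ¬ p ∣ z.natAbs := fun h => hnd (Int.natCast_dvd.mpr h)
        exact Nat.Coprime.gcd_eq_one ((Nat.Prime.coprime_iff_not_dvd hp).mpr hnd')
      obtain ⟨a, b, hab⟩ := hgcd
      have habψ := congrArg ψ hab
      rw [map_add, map_mul, map_mul, map_one, h0, hψp, mul_zero, mul_zero, add_zero] at habψ
      exact one_ne_zero habψ.symm
    · rintro ⟨c, rfl⟩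
      rw [map_mul, hψp, zero_mul]
  haveI hchar : CharP (R ⧸ 𝔭) p := by
    constructor
    intro a
    rw [← map_natCast ψ a, hker]
    exact Int.natCast_dvd_natCast
  have hψm : ψ m = 0 := (hker m).mpr hdvd
  have hTzero : (Ideal.Quotient.mk 𝔭) (T.prod) = 0 := by
    rw [← hm]
    exact hψm
  rw [map_multiset_prod] at hTzero
  obtain ⟨x, hx, hx0⟩ := Multiset.mem_map.mp (Multiset.prod_eq_zero_iff.mp hTzero)
  obtain ⟨θ, hθn, rfl⟩ := hT x hx
  have hπ : (Ideal.Quotient.mk 𝔭) (Polynomial.aeval θ (Gz n))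
      = Polynomial.aeval ((Ideal.Quotient.mk 𝔭) θ) (Gz n) :=
    (Polynomial.aeval_algHom_apply ((Ideal.Quotient.mk 𝔭).toIntAlgHom) θ (Gz n)).symm
  have hθpow : ((Ideal.Quotient.mk 𝔭) θ) ^ n = 1 := by
    rw [← map_pow, hθn, map_one]
  have hθbar1 : (Ideal.Quotient.mk 𝔭) θ = 1 := by
    have hsub : ((Ideal.Quotient.mk 𝔭) θ - 1) ^ (p ^ e) = 0 := by
      rw [sub_pow_char_pow, one_pow, ← hnpe, hθpow, sub_self]
    have hpe0 : p ^ e ≠ 0 := pow_ne_zero e hp.pos.ne'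
    exact sub_eq_zero.mp (pow_eq_zero_iff hpe0 |>.mp hsub)
  have hfinal : ψ ((Gz n).eval 1) = 0 := by
    have h1 : Polynomial.aeval ((Ideal.Quotient.mk 𝔭) θ) (Gz n) = ψ ((Gz n).eval 1) := by
      rw [hθbar1,
        show (1 : R ⧸ 𝔭) = (algebraMap ℤ (R ⧸ 𝔭)) 1 from (map_one _).symm,
        Polynomial.aeval_algebraMap_apply_eq_algebraMap_eval]
      rw [show (algebraMap ℤ (R ⧸ 𝔭)) = ψ from Subsingleton.elim _ _]
    rw [← h1, ← hπ, hx0]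
  exact hGz ((hker _).mp hfinal)

set_option maxHeartbeats 1000000 in
set_option synthInstance.maxHeartbeats 100000 in
lemma exists_int_prod {p e n : ℕ} (hp : p.Prime) (he : 1 ≤ e) (hnpe : n = p ^ e) :
    ∃ m : ℤ, ((m : ℚ) : ℂ) = ((gc n).roots.map (fun θ => Polynomial.aeval θ (Gz n))).prod
      ∧ ¬ (p : ℤ) ∣ m := by
  haveI : Fact p.Prime := ⟨hp⟩
  have h2 : 2 ≤ n := hn2 hp he hnpe
  have hn1 : 1 ≤ n := by omega
  -- rationality
  obtain ⟨q, hq⟩ := exists_rat_prod_aux (n - 1) (gq n) (gq_monic hn1)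
    (le_of_eq (gq_natDegree hn1)) ((Gz n).map (Int.castRingHom ℚ))
  have hmapmap : ((Gz n).map (Int.castRingHom ℚ)).map (algebraMap ℚ ℂ)
      = (Gz n).map (Int.castRingHom ℂ) := by
    rw [Polynomial.map_map,
      Subsingleton.elim ((algebraMap ℚ ℂ).comp (Int.castRingHom ℚ)) (Int.castRingHom ℂ)]
  have hmapeval : ∀ θ : ℂ, (((Gz n).map (Int.castRingHom ℚ)).map (algebraMap ℚ ℂ)).eval θ
      = Polynomial.aeval θ (Gz n) := by
    intro θ
    rw [hmapmap, Polynomial.eval_map, Polynomial.aeval_def, algebraMap_int_eq]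
  simp only [hmapeval] at hq
  have hq' : (((gc n).roots.map (fun θ => Polynomial.aeval θ (Gz n)))).prod = ((q : ℚ) : ℂ) := hq
  -- integrality
  set S : Multiset ℂ := (gc n).roots with hS
  have hintθ : ∀ x : {x // x ∈ S}, IsIntegral ℤ (x : ℂ) :=
    fun x => gc_roots_integral hn1 x.2
  set u : {x // x ∈ S} → integralClosure ℤ ℂ :=
    fun x => Polynomial.aeval (⟨(x : ℂ), hintθ x⟩ : integralClosure ℤ ℂ) (Gz n) with hu
  set t : integralClosure ℤ ℂ := (S.attach.map u).prod with ht
  have heq : ∀ x : {x // x ∈ S},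
      (integralClosure ℤ ℂ).val (u x) = Polynomial.aeval (x : ℂ) (Gz n) :=
    fun x => (Polynomial.aeval_algHom_apply (integralClosure ℤ ℂ).val
      (⟨(x : ℂ), hintθ x⟩ : integralClosure ℤ ℂ) (Gz n)).symm
  have hcoet : (integralClosure ℤ ℂ).val t
      = (S.map (fun θ => Polynomial.aeval θ (Gz n))).prod := by
    rw [ht, map_multiset_prod, Multiset.map_map]
    calc (S.attach.map ((integralClosure ℤ ℂ).val ∘ u)).prod
        = (S.attach.map (fun x : {x // x ∈ S} => Polynomial.aeval (x : ℂ) (Gz n))).prod := by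
          exact congrArg Multiset.prod (Multiset.map_congr rfl (fun x _ => heq x))
      _ = (S.map (fun θ => Polynomial.aeval θ (Gz n))).prod := by
          rw [show (fun x : {x // x ∈ S} => Polynomial.aeval (x : ℂ) (Gz n))
              = ((fun θ : ℂ => Polynomial.aeval θ (Gz n)) ∘ Subtype.val) from rfl,
            ← Multiset.map_map, Multiset.attach_map_val]
  have hqc : ((q : ℚ) : ℂ) = (integralClosure ℤ ℂ).val t := by
    rw [hcoet, ← hq']
  have hqint : IsIntegral ℤ q := by
    have h1 : IsIntegral ℤ ((q : ℚ) : ℂ) := hqc ▸ t.2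
    have h2 : (algebraMap ℚ ℂ).toIntAlgHom q = ((q : ℚ) : ℂ) := by
      rw [RingHom.toIntAlgHom_apply, eq_ratCast]
    exact (isIntegral_algHom_iff ((algebraMap ℚ ℂ).toIntAlgHom)
      (algebraMap ℚ ℂ).injective).mp (h2 ▸ h1)
  obtain ⟨m, hm⟩ := IsIntegrallyClosed.isIntegral_iff.mp hqint
  have hmq : (m : ℚ) = q := by rw [← hm]; simp
  refine ⟨m, by rw [hmq, hq'], ?_⟩
  -- prepare for the quotient argument
  have hinj : Function.Injective ⇑(integralClosure ℤ ℂ).val :=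
    Subtype.val_injective
  have hιval : ∀ z : ℤ, (integralClosure ℤ ℂ).val ((algebraMap ℤ (integralClosure ℤ ℂ)) z)
      = (z : ℂ) := by
    intro z
    rw [AlgHom.commutes, algebraMap_int_eq, eq_intCast]
  have htm : (algebraMap ℤ (integralClosure ℤ ℂ)) m = t := by
    apply hinj
    rw [← hqc, hιval, ← hmq]
    push_cast
    rfl
  have hpnu : ¬ IsUnit ((algebraMap ℤ (integralClosure ℤ ℂ)) ((p : ℤ))) := by
    intro hunit
    obtain ⟨v, hv⟩ := hunit.exists_right_inv
    have hv1 : ((p : ℂ)) * ((integralClosure ℤ ℂ).val v) = 1 := by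
      have h := congrArg (integralClosure ℤ ℂ).val hv
      rw [map_mul, map_one, hιval] at h
      push_cast at h
      exact h
    have hvv : (integralClosure ℤ ℂ).val v = ((((p : ℚ))⁻¹ : ℚ) : ℂ) := by
      have hc : ((((p : ℚ))⁻¹ : ℚ) : ℂ) = ((p : ℂ))⁻¹ := by push_cast; ring
      rw [hc]
      exact eq_inv_of_mul_eq_one_right hv1
    have hvint : IsIntegral ℤ (((((p : ℚ))⁻¹ : ℚ)) : ℂ) := hvv ▸ v.2
    have hvint2 : IsIntegral ℤ (((p : ℚ))⁻¹) := by
      have h2 : (algebraMap ℚ ℂ).toIntAlgHom (((p : ℚ))⁻¹) = ((((p : ℚ))⁻¹ : ℚ) : ℂ) := by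
        rw [RingHom.toIntAlgHom_apply, eq_ratCast]
      exact (isIntegral_algHom_iff ((algebraMap ℚ ℂ).toIntAlgHom)
        (algebraMap ℚ ℂ).injective).mp (h2 ▸ hvint)
    obtain ⟨z, hz⟩ := IsIntegrallyClosed.isIntegral_iff.mp hvint2
    have hzq : (z : ℚ) = ((p : ℚ))⁻¹ := by rw [← hz]; simp
    have hpq0 : (p : ℚ) ≠ 0 := Nat.cast_ne_zero.mpr hp.pos.ne'
    have hpz : (p : ℚ) * (z : ℚ) = 1 := by rw [hzq]; field_simp
    have hpz' : (p : ℤ) * z = 1 := by exact_mod_cast hpz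
    have h1 : (p : ℤ) ∣ 1 := ⟨z, hpz'.symm⟩
    have h2 := Int.le_of_dvd one_pos h1
    have h3 := hp.two_le
    omega
  have hGz1 : ¬ (p : ℤ) ∣ (Gz n).eval 1 := by
    rw [Gz_eval_one]
    intro hpdvd
    exact key_arith hp he hnpe (Int.natCast_dvd_natCast.mp hpdvd)
  refine quotient_not_dvd hp he hnpe hpnu hGz1 (S.attach.map u) ?_ m (by rw [htm, ht])
  intro x hx
  obtain ⟨y, hy, rfl⟩ := Multiset.mem_map.mp hx
  refine ⟨(⟨(y : ℂ), hintθ y⟩ : integralClosure ℤ ℂ), ?_, rfl⟩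
  have hval : (((⟨(y : ℂ), hintθ y⟩ : integralClosure ℤ ℂ) ^ n : integralClosure ℤ ℂ) : ℂ)
      = 1 := by
    rw [SubmonoidClass.coe_pow]
    exact gc_roots_pow y.2
  exact Subtype.ext (by rw [hval]; rfl)

end AuxProof

/-- If `p ≡ 1 (mod 4)` is prime, `e ≥ 1` and `n = p^e`, then the `p`-adic
valuation of `disc(F n)` equals `e − e(n−1)`. -/
theorem stmt16 (p e n : ℕ) (hp : p.Prime) (hp4 : p % 4 = 1) (he : 0 < e) (hn : n = p ^ e) :
    ∃ r : ℚ, (r : ℂ) = discC (F n) ∧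
      padicValRat p r = (e : ℤ) - (e : ℤ) * ((n : ℤ) - 1) := by
  haveI : Fact p.Prime := ⟨hp⟩
  have hn2' : 2 ≤ n := hn2 hp he hn
  have hn1 : 1 ≤ n := by omega
  obtain ⟨m, hmprod, hmnd⟩ := exists_int_prod hp he hn
  have hLnC : ((Ln n : ℂ)) ≠ 0 := Nat.cast_ne_zero.mpr (Ln_ne_zero n)
  -- relate aeval of Gz to Fc
  have hGF : ∀ θ : ℂ, Polynomial.aeval θ (Gz n) = (Ln n : ℂ) * (Fc n).eval θ := by
    intro θ
    have h1 : Polynomial.aeval θ (Gz n)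
        = (((Gz n).map (Int.castRingHom ℚ)).map (algebraMap ℚ ℂ)).eval θ := by
      rw [Polynomial.map_map,
        Subsingleton.elim ((algebraMap ℚ ℂ).comp (Int.castRingHom ℚ)) (Int.castRingHom ℂ),
        Polynomial.eval_map, Polynomial.aeval_def, algebraMap_int_eq]
    rw [h1, Gz_map_rat, Polynomial.map_mul, Polynomial.map_C, Polynomial.eval_mul,
      Polynomial.eval_C, ← Fc, map_natCast]
  have hprod : ((m : ℚ) : ℂ)
      = (Ln n : ℂ) ^ (n - 1) * ((gc n).roots.map (fun θ => (Fc n).eval θ)).prod := by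
    rw [hmprod, Multiset.map_congr rfl (fun θ _ => hGF θ), prod_map_neg_one_mul,
      gc_roots_card hn1]
  have hprodFc : ((gc n).roots.map (fun θ => (Fc n).eval θ)).prod
      = ((m : ℚ) : ℂ) / (Ln n : ℂ) ^ (n - 1) := by
    rw [eq_div_iff (pow_ne_zero _ hLnC), hprod]
    ring
  refine ⟨(-1) ^ (n.choose 2) * ((n : ℚ) * (m : ℚ) / (Ln n : ℚ) ^ (n - 1)), ?_, ?_⟩
  · rw [discC_eq hn2', hprodFc]
    push_cast
    ring
  · have hm0 : m ≠ 0 := fun h => hmnd (h ▸ dvd_zero _)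
    have hnq0 : ((n : ℚ)) ≠ 0 := Nat.cast_ne_zero.mpr (by omega)
    have hmq0 : ((m : ℚ)) ≠ 0 := Int.cast_ne_zero.mpr hm0
    have hLnq0 : ((Ln n : ℚ)) ≠ 0 := Nat.cast_ne_zero.mpr (Ln_ne_zero n)
    have hvn : padicValRat p ((n : ℚ)) = (e : ℤ) := by
      rw [← padicValRat_of_nat, hn, padicValNat.prime_pow]
    have hvm : padicValRat p ((m : ℚ)) = 0 := by
      rw [padicValRat.of_int, padicValInt.eq_zero_of_not_dvd hmnd]
      simp
    have hvLn : padicValNat p (Ln n) = e := by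
      have h1 : p ^ e ∣ Ln n := hn ▸ n_dvd_Ln hp he hn
      have h2 : ¬ p ^ (e + 1) ∣ Ln n := not_pe1_dvd_Ln hp he hn
      have h3 : e ≤ (Ln n).factorization p :=
        (Nat.Prime.pow_dvd_iff_le_factorization hp (Ln_ne_zero n)).mp h1
      have h4 : ¬ (e + 1 ≤ (Ln n).factorization p) := fun hcon =>
        h2 ((Nat.Prime.pow_dvd_iff_le_factorization hp (Ln_ne_zero n)).mpr hcon)
      rw [← Nat.factorization_def _ hp]
      omega
    have hvb : padicValRat p ((n : ℚ) * (m : ℚ) / (Ln n : ℚ) ^ (n - 1))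
        = (e : ℤ) - (e : ℤ) * ((n : ℤ) - 1) := by
      rw [padicValRat.div (mul_ne_zero hnq0 hmq0) (pow_ne_zero _ hLnq0),
        padicValRat.mul hnq0 hmq0, padicValRat.pow _, hvn, hvm,
        ← padicValRat_of_nat, hvLn]
      have : ((n - 1 : ℕ) : ℤ) = (n : ℤ) - 1 := by
        push_cast [Nat.cast_sub hn1]
        ring
      rw [this]
      ring
    rcases Nat.even_or_odd (n.choose 2) with hev | hod
    · rw [hev.neg_one_pow, one_mul]
      exact hvb
    · rw [hod.neg_one_pow, neg_one_mul, padicValRat.neg]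
      exact hvb
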